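/- Let 𝔤 be a 2-dimensional real Lie algebra with a nondegenerate symmetric bilinear form B, and let ∇ be its Levi-Civita product. There exists a nonzero x ∈ 𝔤 such that B(∇_u x, v) + B(∇_v x, u) = 0 for all u, v ∈ 𝔤 if and only if 𝔤 is abelian. -/

import Mathlib

/-- Section 6.1: a 2-dimensional metric Lie algebra `(𝔤,B)` admits a nonzero
left-invariant Killing field (for the Levi-Civita product `∇`) if and only if `𝔤`
is abelian. -/
theorem stmt_7 {𝔤 : Type*} [LieRing 𝔤] [LieAlgebra ℝ 𝔤] [FiniteDimensional ℝ 𝔤]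
    (hdim : Module.finrank ℝ 𝔤 = 2)
    (B : LinearMap.BilinForm ℝ 𝔤)
    (hBsymm : ∀ x y, B x y = B y x)
    (hBnd : ∀ x, (∀ y, B x y = 0) → x = 0)
    (N : 𝔤 → 𝔤 → 𝔤)
    (hK : ∀ x y z, 2 * B (N x y) z = B ⁅x, y⁆ z - B ⁅y, z⁆ x + B ⁅z, x⁆ y) :
    (∃ x : 𝔤, x ≠ 0 ∧ ∀ u v : 𝔤, B (N u x) v + B (N v x) u = 0) ↔
      ∀ x y : 𝔤, ⁅x, y⁆ = 0 := by
  constructor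
  · rintro ⟨x, hx0, hx⟩
    -- key consequence: ad-skewness
    have key : ∀ u v : 𝔤, B ⁅u, x⁆ v + B ⁅v, x⁆ u = 0 := by
      intro u v
      have h1 := hK u x v
      have h2 := hK v x u
      have h3 := hx u v
      have hskew : ∀ w z y : 𝔤, B ⁅w, z⁆ y = - B ⁅z, w⁆ y := by
        intro w z y
        rw [← lie_skew, map_neg, LinearMap.neg_apply]
      linarith [h1, h2, h3, hskew x v u, hskew x u v, hskew v u x]
    intro a b
    by_contra hc
    set c := ⁅a, b⁆ with hcdef
    -- a, b are linearly independent
    have hli : LinearIndependent ℝ ![a, b] := by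
      rw [LinearIndependent.pair_iff]
      intro s t hst
      by_contra hns
      have hsor : s ≠ 0 ∨ t ≠ 0 := by tauto
      rcases hsor with hs | ht
      · have h2 : s • a = (-t) • b := by linear_combination (norm := module) hst
        have hb : a = (s⁻¹ * -t) • b := by
          have h3 := congrArg (fun w => s⁻¹ • w) h2
          simpa [smul_smul, inv_mul_cancel₀ hs] using h3
        apply hc
        rw [hcdef, hb]
        simp [smul_lie, lie_self]
      · have h2 : t • b = (-s) • a := by linear_combination (norm := module) hst
        have hb : b = (t⁻¹ * -s) • a := by
          have h3 := congrArg (fun w => t⁻¹ • w) h2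
          simpa [smul_smul, inv_mul_cancel₀ ht] using h3
        apply hc
        rw [hcdef, hb]
        simp [lie_smul, lie_self]
    have hcard : Fintype.card (Fin 2) = Module.finrank ℝ 𝔤 := by simp [hdim]
    let bb : Module.Basis (Fin 2) ℝ 𝔤 := basisOfLinearIndependentOfCardEqFinrank hli hcard
    have hbb : ∀ i, bb i = ![a, b] i := fun i => by
      simp [bb, coe_basisOfLinearIndependentOfCardEqFinrank]
    have hspan : ∀ u : 𝔤, ∃ p q : ℝ, u = p • a + q • b := by
      intro u
      refine ⟨bb.repr u 0, bb.repr u 1, ?_⟩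
      have := bb.sum_repr u
      rw [Fin.sum_univ_two, hbb 0, hbb 1] at this
      simpa using this.symm
    -- every bracket is a multiple of c
    have hmul : ∀ u v : 𝔤, ∃ r : ℝ, ⁅u, v⁆ = r • c := by
      intro u v
      obtain ⟨p, q, hu⟩ := hspan u
      obtain ⟨r, s, hv⟩ := hspan v
      refine ⟨p * s - q * r, ?_⟩
      rw [hu, hv]
      simp only [add_lie, lie_add, smul_lie, lie_smul, lie_self, smul_zero, ← hcdef,
        smul_smul, add_zero, zero_add]
      rw [← lie_skew b a, ← hcdef]
      module
    -- pick v₀ with B c v₀ ≠ 0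
    have hv0 : ∃ v0 : 𝔤, B c v0 ≠ 0 := by
      by_contra h
      push_neg at h
      exact hc (hBnd c h)
    obtain ⟨v0, hv0⟩ := hv0
    -- x is central
    have hcent : ∀ u : 𝔤, ⁅u, x⁆ = 0 := by
      have hr0 : ⁅v0, x⁆ = 0 := by
        obtain ⟨r0, hr0⟩ := hmul v0 x
        have := key v0 v0
        rw [hr0] at this ⊢
        simp only [map_smul, LinearMap.smul_apply, smul_eq_mul] at this
        have h0 : r0 * B c v0 = 0 := by linarith
        have : r0 = 0 := (mul_eq_zero.mp h0).resolve_right hv0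
        simp [this]
      intro u
      obtain ⟨r, hr⟩ := hmul u x
      have := key u v0
      rw [hr, hr0] at this
      simp only [map_smul, LinearMap.smul_apply, smul_eq_mul, map_zero,
        LinearMap.zero_apply, add_zero] at this
      have : r = 0 := by
        rcases mul_eq_zero.mp this with h | h
        · exact h
        · exact absurd h hv0
      rw [hr, this, zero_smul]
    -- derive x = 0, contradiction
    obtain ⟨p, q, hxpq⟩ := hspan x
    have hxa : ⁅x, a⁆ = -q • c := by
      rw [hxpq]
      simp only [add_lie, smul_lie, lie_self, smul_zero, zero_add]
      rw [← lie_skew b a, ← hcdef]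
      module
    have hxb : ⁅x, b⁆ = p • c := by
      rw [hxpq]
      simp only [add_lie, smul_lie, lie_self, smul_zero, add_zero, ← hcdef]
    have hq : q = 0 := by
      have h1 : ⁅x, a⁆ = 0 := by rw [← lie_skew, hcent a, neg_zero]
      rw [hxa] at h1
      have := smul_eq_zero.mp h1
      rcases this with h | h
      · simpa using h
      · exact absurd h hc
    have hp : p = 0 := by
      have h1 : ⁅x, b⁆ = 0 := by rw [← lie_skew, hcent b, neg_zero]
      rw [hxb] at h1
      rcases smul_eq_zero.mp h1 with h | h
      · exact h
      · exact absurd h hc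
    apply hx0
    rw [hxpq, hp, hq, zero_smul, zero_smul, add_zero]
  · intro hab
    have hpos : 0 < Module.finrank ℝ 𝔤 := by omega
    have : Nontrivial 𝔤 := Module.nontrivial_of_finrank_pos hpos
    obtain ⟨x, hx⟩ := exists_ne (0 : 𝔤)
    refine ⟨x, hx, fun u v => ?_⟩
    have h1 := hK u x v
    have h2 := hK v x u
    simp only [hab, map_zero, LinearMap.zero_apply] at h1 h2
    linarith
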